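/- For every μ > 0 there exists a constant c > 0 such that for all y ∈ ℝ², e^{Ū_μ(y)} (1 + Ū_μ(y)⁴) ≤ c μ/(μ² + |y|²)^{3/2}, i.e. (8μ²/(μ² + |y|²)²) · (1 + log⁴(8μ²/(μ² + |y|²)²)) ≤ c μ/(μ² + |y|²)^{3/2}. -/

import Mathlib

open Real

/-- `Ū_μ(y) = log(8μ²/(μ² + |y|²)²)`. -/
noncomputable def Ubar (μ : ℝ) (y : EuclideanSpace ℝ (Fin 2)) : ℝ :=
  Real.log (8 * μ ^ 2 / (μ ^ 2 + ‖y‖ ^ 2) ^ 2)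

lemma log_pow_four_le (w : ℝ) (hw : 1 ≤ w) : (Real.log w) ^ 4 ≤ 4096 * Real.sqrt w := by
  set s := Real.sqrt (Real.sqrt (Real.sqrt w)) with hsdef
  have hw0 : (0:ℝ) ≤ w := le_trans zero_le_one hw
  have h1 : Real.sqrt (Real.sqrt w) ^ 2 = Real.sqrt w := Real.sq_sqrt (Real.sqrt_nonneg w)
  have h2 : s ^ 2 = Real.sqrt (Real.sqrt w) := Real.sq_sqrt (Real.sqrt_nonneg _)
  have h3 : Real.sqrt w ^ 2 = w := Real.sq_sqrt hw0
  have h8 : s ^ 8 = w := by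
    calc s ^ 8 = ((s ^ 2) ^ 2) ^ 2 := by ring
    _ = w := by rw [h2, h1, h3]
  have hsw1 : 1 ≤ Real.sqrt w := by
    have := Real.sqrt_le_sqrt hw
    simpa using this
  have hsw2 : 1 ≤ Real.sqrt (Real.sqrt w) := by
    have := Real.sqrt_le_sqrt hsw1
    simpa using this
  have hs1 : 1 ≤ s := by
    have := Real.sqrt_le_sqrt hsw2
    simpa [hsdef] using this
  have hlog : Real.log w = 8 * Real.log s := by
    rw [← h8, Real.log_pow]; push_cast; ring
  have hls : Real.log s ≤ s := by
    have := Real.log_le_sub_one_of_pos (by linarith : (0:ℝ) < s)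
    linarith
  have hls0 : 0 ≤ Real.log s := Real.log_nonneg hs1
  have hsw : s ^ 4 = Real.sqrt w := by
    calc s ^ 4 = (s ^ 2) ^ 2 := by ring
    _ = Real.sqrt w := by rw [h2, h1]
  have hp : (Real.log s) ^ 4 ≤ s ^ 4 := pow_le_pow_left₀ hls0 hls 4
  calc (Real.log w) ^ 4 = 4096 * (Real.log s) ^ 4 := by rw [hlog]; ring
  _ ≤ 4096 * s ^ 4 := by linarith
  _ = 4096 * Real.sqrt w := by rw [hsw]

/-- For every `μ > 0` there is `c > 0` with
`e^{Ū_μ(y)} (1 + Ū_μ(y)⁴) ≤ c μ/(μ² + |y|²)^{3/2}` for all `y ∈ ℝ²`. -/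
theorem exp_Ubar_weight_bound (μ : ℝ) (hμ : 0 < μ) :
    ∃ c : ℝ, 0 < c ∧ ∀ y : EuclideanSpace ℝ (Fin 2),
      Real.exp (Ubar μ y) * (1 + (Ubar μ y) ^ 4)
        ≤ c * μ / (μ ^ 2 + ‖y‖ ^ 2) ^ ((3 : ℝ) / 2) := by
  set A := Real.log (8 / μ ^ 2) with hA
  have hA4 : (0:ℝ) ≤ A ^ 4 := by positivity
  refine ⟨8 * (1 + 8 * A ^ 4) + 4194304, by positivity, fun y => ?_⟩
  set x := μ ^ 2 + ‖y‖ ^ 2 with hx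
  have hx0 : (0:ℝ) < x := by positivity
  have hxμ : μ ^ 2 ≤ x := le_add_of_nonneg_right (by positivity)
  set s := Real.sqrt x with hsdef
  have hs2 : s ^ 2 = x := Real.sq_sqrt hx0.le
  have hμs : μ ≤ s := by
    have h := Real.sqrt_le_sqrt hxμ
    rwa [Real.sqrt_sq hμ.le] at h
  have hs0 : (0:ℝ) < s := lt_of_lt_of_le hμ hμs
  have harg : (0:ℝ) < 8 * μ ^ 2 / x ^ 2 := by positivity
  have hU : Ubar μ y = Real.log (8 * μ ^ 2 / x ^ 2) := by
    simp only [Ubar]; rfl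
  have hexp : Real.exp (Ubar μ y) = 8 * μ ^ 2 / x ^ 2 := by
    rw [hU]; exact Real.exp_log harg
  set w := x / μ ^ 2 with hw
  have hw1 : (1:ℝ) ≤ w := (one_le_div (by positivity)).2 hxμ
  have hlog4 := log_pow_four_le w hw1
  have hsw : Real.sqrt w = s / μ := by
    rw [show w = (s / μ) ^ 2 by rw [div_pow, hs2]]
    exact Real.sqrt_sq (by positivity)
  set L := Ubar μ y with hLdef
  have hL : L = A - 2 * Real.log w := by
    rw [hU, show 8 * μ ^ 2 / x ^ 2 = (8 / μ ^ 2) / w ^ 2 by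
      field_simp [hw]; rw [hw, div_pow, ← pow_mul, mul_div_cancel₀ _ (by positivity)]]
    rw [Real.log_div (by positivity) (by positivity), Real.log_pow, hA]
    push_cast; ring
  have hL4 : L ^ 4 ≤ 8 * A ^ 4 + 128 * (Real.log w) ^ 4 := by
    rw [hL]
    nlinarith [sq_nonneg (A + 2 * Real.log w), sq_nonneg (A - 2 * Real.log w),
      sq_nonneg (A ^ 2 - 4 * (Real.log w) ^ 2), sq_nonneg (A ^ 2 + 4 * (Real.log w) ^ 2),
      sq_nonneg (A * Real.log w)]
  have key : (Real.log w) ^ 4 ≤ 4096 * (s / μ) := by rw [← hsw]; exact hlog4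
  have key' : μ * (Real.log w) ^ 4 ≤ 4096 * s := by
    have h := mul_le_mul_of_nonneg_left key hμ.le
    have he : μ * (4096 * (s / μ)) = 4096 * s := by field_simp
    linarith [he ▸ h]
  have h32 : x ^ ((3:ℝ)/2) = x * s := by
    rw [show (3:ℝ)/2 = 1 + 1/2 by norm_num, Real.rpow_add hx0, Real.rpow_one,
      hsdef, Real.sqrt_eq_rpow]
  rw [hexp, h32, div_mul_eq_mul_div, div_le_div_iff₀ (by positivity) (by positivity)]
  rw [← hs2]
  have hnn1 : (0:ℝ) ≤ 8 * μ ^ 2 * s ^ 3 := by positivity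
  have h1 := mul_le_mul_of_nonneg_left hL4 hnn1
  have hnn2 : (0:ℝ) ≤ 1024 * μ * s ^ 3 :=
    mul_nonneg (mul_nonneg (by norm_num) hμ.le) (by positivity)
  have h2 := mul_le_mul_of_nonneg_left key' hnn2
  have hnn3 : (0:ℝ) ≤ 8 * μ * s ^ 3 * (1 + 8 * A ^ 4) :=
    mul_nonneg (mul_nonneg (mul_nonneg (by norm_num) hμ.le) (by positivity)) (by positivity)
  have h3 := mul_le_mul_of_nonneg_left hμs hnn3
  nlinarith [h1, h2, h3]
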